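/- Let (C, N, (A_i)_{i∈N}, k) be an approval election with n = |N| and k ≥ 1, and let W ⊆ C with |W| = k be such that pavscore(W') ≤ pavscore(W) for every W' ⊆ C with |W'| = k. Then W provides Droop-EJR+. -/

import Mathlib

/-- The PAV score of a committee `W`:  `Σ_{i∈N} Σ_{j=1}^{|A_i ∩ W|} 1/j`. -/
def pavscore {V K : Type*} [DecidableEq K] (N : Finset V) (A : V → Finset K)
    (W : Finset K) : ℚ :=
  ∑ i ∈ N, ∑ j ∈ Finset.Icc 1 (A i ∩ W).card, (1 : ℚ) / (j : ℚ)

/-- An outcome `W` provides Droop-EJR+ if there is no `ℓ ∈ {1,...,k}`, group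
`S ⊆ N` with `|S| > ℓ·n/(k+1)`, and candidate `c ∈ (⋂_{i∈S} A_i) \ W` such that
`|A_i ∩ W| ≤ ℓ − 1` for every `i ∈ S`. -/
def DroopEJRplus {V K : Type*} [DecidableEq K]
    (N : Finset V) (C : Finset K) (A : V → Finset K) (k : ℕ) (W : Finset K) : Prop :=
  ¬ ∃ ℓ : ℕ, 1 ≤ ℓ ∧ ℓ ≤ k ∧ ∃ S ⊆ N,
      (S.card : ℚ) > (ℓ : ℚ) * (N.card : ℚ) / ((k : ℚ) + 1) ∧
      ∃ c ∈ C, c ∉ W ∧ (∀ i ∈ S, c ∈ A i) ∧ ∀ i ∈ S, (A i ∩ W).card ≤ ℓ - 1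

/-- Marginal contribution of inserting a new candidate into a committee. -/
lemma pav_insert {V K : Type*} [DecidableEq K] (N : Finset V) (A : V → Finset K)
    (W : Finset K) (c : K) (hc : c ∉ W) :
    pavscore N A (insert c W) =
      pavscore N A W +
        ∑ i ∈ N, (if c ∈ A i then (1 : ℚ) / ((A i ∩ W).card + 1) else 0) := by
  unfold pavscore
  rw [← Finset.sum_add_distrib]
  refine Finset.sum_congr rfl fun i _ => ?_
  by_cases h : c ∈ A i
  · have hne : c ∉ A i ∩ W := fun hmem => hc (Finset.mem_of_mem_inter_right hmem)
    have hins : A i ∩ insert c W = insert c (A i ∩ W) := by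
      ext x
      simp only [Finset.mem_inter, Finset.mem_insert]
      constructor
      · rintro ⟨hx, rfl | hw⟩
        · exact Or.inl rfl
        · exact Or.inr ⟨hx, hw⟩
      · rintro (rfl | ⟨hx, hw⟩)
        · exact ⟨h, Or.inl rfl⟩
        · exact ⟨hx, Or.inr hw⟩
    rw [hins, Finset.card_insert_of_notMem hne, if_pos h,
      Finset.sum_Icc_succ_top (Nat.le_add_left 1 _)]
    push_cast
    ring
  · have hsame : A i ∩ insert c W = A i ∩ W := by
      ext x
      simp only [Finset.mem_inter, Finset.mem_insert]
      constructor
      · rintro ⟨hx, rfl | hw⟩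
        · exact absurd hx h
        · exact ⟨hx, hw⟩
      · rintro ⟨hx, hw⟩
        exact ⟨hx, Or.inr hw⟩
    rw [hsame, if_neg h, add_zero]

/-- A size-`k` committee maximizing the PAV score among all
size-`k` committees provides Droop-EJR+. -/
theorem stmt_2 {V K : Type*} [DecidableEq V] [DecidableEq K]
    (N : Finset V) (C : Finset K) (A : V → Finset K) (k : ℕ)
    (hA : ∀ i ∈ N, A i ⊆ C) (hk : 1 ≤ k)
    (W : Finset K) (hWC : W ⊆ C) (hWcard : W.card = k)
    (hmax : ∀ W' ⊆ C, W'.card = k → pavscore N A W' ≤ pavscore N A W) :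
    DroopEJRplus N C A k W := by
  rintro ⟨ℓ, hℓ1, hℓk, S, hSN, hScard, c, hcC, hcW, hcA, hbound⟩
  set W' := insert c W with hW'def
  have hWW' : W ⊆ W' := Finset.subset_insert c W
  have hℓq : (1 : ℚ) ≤ (ℓ : ℚ) := by exact_mod_cast hℓ1
  have hℓpos : (0 : ℚ) < (ℓ : ℚ) := by linarith
  have hkq : (1 : ℚ) ≤ (k : ℚ) := by exact_mod_cast hk
  have hkpos : (0 : ℚ) < (k : ℚ) := by linarith
  have hkne : (k : ℚ) ≠ 0 := ne_of_gt hkpos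
  -- for i ∈ S, the intersection with W' gains exactly one element
  have hScardW' : ∀ i ∈ S, (A i ∩ W').card = (A i ∩ W).card + 1 := by
    intro i hi
    have hci : c ∈ A i := hcA i hi
    have hne : c ∉ A i ∩ W := fun hmem => hcW (Finset.mem_of_mem_inter_right hmem)
    have hins : A i ∩ W' = insert c (A i ∩ W) := by
      ext x
      simp only [hW'def, Finset.mem_inter, Finset.mem_insert]
      constructor
      · rintro ⟨hx, rfl | hw⟩
        · exact Or.inl rfl
        · exact Or.inr ⟨hx, hw⟩
      · rintro (rfl | ⟨hx, hw⟩)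
        · exact ⟨hci, Or.inl rfl⟩
        · exact ⟨hx, Or.inr hw⟩
    rw [hins, Finset.card_insert_of_notMem hne]
  have hSle : ∀ i ∈ S, (A i ∩ W).card + 1 ≤ ℓ := by
    intro i hi
    have := hbound i hi
    omega
  -- the gain from inserting c
  set G : ℚ := ∑ i ∈ N, (if c ∈ A i then (1 : ℚ) / ((A i ∩ W).card + 1) else 0) with hGdef
  have hgain : pavscore N A W' = pavscore N A W + G := pav_insert N A W c hcW
  -- G is at least |S|/ℓ
  have hGlb : (S.card : ℚ) / (ℓ : ℚ) ≤ G := by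
    have h1 : ∑ i ∈ S, (1 : ℚ) / (ℓ : ℚ) ≤
        ∑ i ∈ S, (if c ∈ A i then (1 : ℚ) / ((A i ∩ W).card + 1) else 0) := by
      refine Finset.sum_le_sum fun i hi => ?_
      rw [if_pos (hcA i hi)]
      have hmpos : (0 : ℚ) < ((A i ∩ W).card : ℚ) + 1 := by positivity
      have hle : ((A i ∩ W).card : ℚ) + 1 ≤ (ℓ : ℚ) := by
        exact_mod_cast hSle i hi
      exact one_div_le_one_div_of_le hmpos hle
    have h2 : ∑ i ∈ S, (if c ∈ A i then (1 : ℚ) / ((A i ∩ W).card + 1) else 0) ≤ G := by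
      refine Finset.sum_le_sum_of_subset_of_nonneg hSN fun i _ _ => ?_
      split <;> positivity
    have h3 : ∑ i ∈ S, (1 : ℚ) / (ℓ : ℚ) = (S.card : ℚ) / (ℓ : ℚ) := by
      rw [Finset.sum_const, nsmul_eq_mul, mul_one_div]
    linarith
  -- the loss from erasing w from W'
  set L : K → ℚ := fun w =>
    ∑ i ∈ N, (if w ∈ A i then (1 : ℚ) / ((A i ∩ W').card : ℚ) else 0) with hLdef
  have hloss : ∀ w ∈ W, pavscore N A W' = pavscore N A (W'.erase w) + L w := by
    intro w hwW
    have hwW' : w ∈ W' := hWW' hwW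
    have h := pav_insert N A (W'.erase w) w (Finset.notMem_erase w W')
    rw [Finset.insert_erase hwW'] at h
    rw [h]
    congr 1
    refine Finset.sum_congr rfl fun i _ => ?_
    by_cases hwA : w ∈ A i
    · rw [if_pos hwA, if_pos hwA]
      have hwmem : w ∈ A i ∩ W' := Finset.mem_inter.mpr ⟨hwA, hwW'⟩
      have hsub : A i ∩ W'.erase w = (A i ∩ W').erase w := by
        ext x
        simp only [Finset.mem_inter, Finset.mem_erase]
        tauto
      have hpos : 0 < (A i ∩ W').card := Finset.card_pos.mpr ⟨w, hwmem⟩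
      have hn : (A i ∩ W'.erase w).card + 1 = (A i ∩ W').card := by
        rw [hsub, Finset.card_erase_of_mem hwmem]
        omega
      rw [show ((A i ∩ W'.erase w).card : ℚ) + 1 = ((A i ∩ W').card : ℚ) by
        exact_mod_cast congrArg (Nat.cast : ℕ → ℚ) hn]
    · rw [if_neg hwA, if_neg hwA]
  -- the total loss is bounded
  have hT : ∑ w ∈ W, L w ≤ (N.card : ℚ) - (S.card : ℚ) / (ℓ : ℚ) := by
    have hTeq : ∑ w ∈ W, L w =
        ∑ i ∈ N, ((A i ∩ W).card : ℚ) * ((1 : ℚ) / ((A i ∩ W').card : ℚ)) := by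
      rw [hLdef, Finset.sum_comm]
      refine Finset.sum_congr rfl fun i _ => ?_
      rw [← Finset.sum_filter, Finset.sum_const, nsmul_eq_mul]
      congr 2
      rw [Finset.filter_mem_eq_inter, Finset.inter_comm]
    rw [hTeq, ← Finset.sum_sdiff hSN]
    have hb1 : ∑ i ∈ N \ S, ((A i ∩ W).card : ℚ) * ((1 : ℚ) / ((A i ∩ W').card : ℚ)) ≤
        ((N \ S).card : ℚ) * 1 := by
      have hsum := Finset.sum_le_card_nsmul (N \ S)
        (fun i => ((A i ∩ W).card : ℚ) * ((1 : ℚ) / ((A i ∩ W').card : ℚ))) 1 ?_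
      · rwa [nsmul_eq_mul] at hsum
      intro i _
      show ((A i ∩ W).card : ℚ) * ((1 : ℚ) / ((A i ∩ W').card : ℚ)) ≤ 1
      have hmono : (A i ∩ W).card ≤ (A i ∩ W').card :=
        Finset.card_le_card (Finset.inter_subset_inter (Finset.Subset.refl _) hWW')
      rcases Nat.eq_zero_or_pos (A i ∩ W').card with h0 | hpos
      · have : (A i ∩ W).card = 0 := by omega
        simp [this]
      · have hposq : (0 : ℚ) < ((A i ∩ W').card : ℚ) := by exact_mod_cast hpos
        rw [mul_one_div, div_le_one hposq]
        exact_mod_cast hmono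
    have hb2 : ∑ i ∈ S, ((A i ∩ W).card : ℚ) * ((1 : ℚ) / ((A i ∩ W').card : ℚ)) ≤
        (S.card : ℚ) * (1 - 1 / (ℓ : ℚ)) := by
      have hsum := Finset.sum_le_card_nsmul S
        (fun i => ((A i ∩ W).card : ℚ) * ((1 : ℚ) / ((A i ∩ W').card : ℚ)))
        (1 - 1 / (ℓ : ℚ)) ?_
      · rwa [nsmul_eq_mul] at hsum
      intro i hi
      show ((A i ∩ W).card : ℚ) * ((1 : ℚ) / ((A i ∩ W').card : ℚ)) ≤ 1 - 1 / (ℓ : ℚ)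
      rw [hScardW' i hi]
      set m : ℚ := ((A i ∩ W).card : ℚ) with hmdef
      have hm0 : (0 : ℚ) ≤ m := by positivity
      have hm1 : (0 : ℚ) < m + 1 := by linarith
      have hcast : ((((A i ∩ W).card : ℕ) + 1 : ℕ) : ℚ) = m + 1 := by push_cast; rfl
      rw [hcast]
      have hle : m + 1 ≤ (ℓ : ℚ) := by
        rw [hmdef]
        exact_mod_cast hSle i hi
      have h1 : (1 : ℚ) / (ℓ : ℚ) ≤ 1 / (m + 1) := one_div_le_one_div_of_le hm1 hle
      have hne' : m + 1 ≠ 0 := ne_of_gt hm1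
      have h2 : m * (1 / (m + 1)) = 1 - 1 / (m + 1) := by
        field_simp
        ring
      rw [h2]
      linarith
    have hcards : ((N \ S).card : ℚ) = (N.card : ℚ) - (S.card : ℚ) := by
      rw [Finset.card_sdiff_of_subset hSN]
      exact Nat.cast_sub (Finset.card_le_card hSN)
    have : ((N \ S).card : ℚ) * 1 + (S.card : ℚ) * (1 - 1 / (ℓ : ℚ)) =
        (N.card : ℚ) - (S.card : ℚ) / (ℓ : ℚ) := by
      rw [hcards]
      ring
    linarith
  -- pick a cheap candidate to remove
  have hWne : W.Nonempty := Finset.card_pos.mp (by omega)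
  have hconst : ∑ _w ∈ W, (((N.card : ℚ) - (S.card : ℚ) / (ℓ : ℚ)) / (k : ℚ)) =
      (N.card : ℚ) - (S.card : ℚ) / (ℓ : ℚ) := by
    rw [Finset.sum_const, hWcard, nsmul_eq_mul, mul_comm, div_mul_cancel₀ _ hkne]
  have hsum : ∑ w ∈ W, L w ≤
      ∑ _w ∈ W, (((N.card : ℚ) - (S.card : ℚ) / (ℓ : ℚ)) / (k : ℚ)) := by
    rw [hconst]; exact hT
  obtain ⟨w, hwW, hwmin⟩ := Finset.exists_le_of_sum_le hWne hsum
  -- strict numeric inequality from the Droop quota condition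
  have hstrict : ((N.card : ℚ) - (S.card : ℚ) / (ℓ : ℚ)) / (k : ℚ) <
      (S.card : ℚ) / (ℓ : ℚ) := by
    set s : ℚ := (S.card : ℚ)
    set nq : ℚ := (N.card : ℚ)
    have h1 : (ℓ : ℚ) * nq < s * ((k : ℚ) + 1) := by
      rw [gt_iff_lt, div_lt_iff₀ (by linarith : (0 : ℚ) < (k : ℚ) + 1)] at hScard
      linarith
    rw [div_lt_div_iff₀ hkpos hℓpos]
    have hcan : s / (ℓ : ℚ) * (ℓ : ℚ) = s := div_mul_cancel₀ s (ne_of_gt hℓpos)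
    have hkey : (nq - s / (ℓ : ℚ)) * (ℓ : ℚ) = nq * (ℓ : ℚ) - s := by
      rw [sub_mul, hcan]
    rw [hkey]
    nlinarith
  -- build the strictly better committee
  have hLwG : L w < G := lt_of_le_of_lt hwmin (lt_of_lt_of_le hstrict hGlb)
  have hW'C : W' ⊆ C := Finset.insert_subset hcC hWC
  have hW''C : W'.erase w ⊆ C := (Finset.erase_subset w W').trans hW'C
  have hW''card : (W'.erase w).card = k := by
    rw [Finset.card_erase_of_mem (Finset.mem_insert_of_mem hwW),
      Finset.card_insert_of_notMem hcW, hWcard]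
    omega
  have hle := hmax (W'.erase w) hW''C hW''card
  have heq := hloss w hwW
  linarith
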